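/- Let w be a minimum length word-representant of a word-representable graph G. Then the number of letters occurring exactly once in w is at most the size of a maximum clique of G. -/

import Mathlib

open SimpleGraph

variable {V : Type*}

/-- Two distinct letters `x` and `y` alternate in a word `w` if the subsequence of `w`
consisting of all occurrences of `x` and `y` is strictly alternating. -/
def Alternates [DecidableEq V] (x y : V) (w : List V) : Prop :=
  (w.filter (fun z => decide (z = x ∨ z = y))).Chain' (· ≠ ·)

/-- A word `w` represents the graph `G` if it contains every vertex at least once and
two distinct vertices are adjacent iff they alternate in `w`. -/
def Represents [DecidableEq V] (G : SimpleGraph V) (w : List V) : Prop :=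
  (∀ v : V, v ∈ w) ∧ ∀ x y : V, x ≠ y → (G.Adj x y ↔ Alternates x y w)

/-- A graph is word-representable if some word represents it. -/
def WordRepresentable [DecidableEq V] (G : SimpleGraph V) : Prop :=
  ∃ w : List V, Represents G w

/-- `l(G)`: the minimum length of a word-representant of `G`. -/
noncomputable def reprLen [DecidableEq V] (G : SimpleGraph V) : ℕ :=
  sInf {n | ∃ w : List V, Represents G w ∧ w.length = n}

lemma aux_len [DecidableEq V] (x y : V) (l : List V) (hxy : x ≠ y)
    (h : ∀ z ∈ l, z = x ∨ z = y) : l.length = l.count x + l.count y := by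
  induction l with
  | nil => simp
  | cons a t ih =>
    have ha := h a (by simp)
    have ht : ∀ z ∈ t, z = x ∨ z = y := fun z hz => h z (by simp [hz])
    rcases ha with rfl | rfl <;>
      simp [List.count_cons, ih ht, hxy, hxy.symm] <;> omega

lemma once_alternates [DecidableEq V] (x y : V) (w : List V) (hxy : x ≠ y)
    (hx : w.count x = 1) (hy : w.count y = 1) : Alternates x y w := by
  unfold Alternates
  set l := w.filter (fun z => decide (z = x ∨ z = y)) with hl
  have hmem : ∀ z ∈ l, z = x ∨ z = y := by
    intro z hz
    have := List.of_mem_filter hz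
    simpa using this
  have hcx : l.count x = 1 := by
    rw [hl, List.count_filter (by simp)]
    exact hx
  have hcy : l.count y = 1 := by
    rw [hl, List.count_filter (by simp)]
    exact hy
  have hlen : l.length = 2 := by
    rw [aux_len x y l hxy hmem, hcx, hcy]
  obtain ⟨a, b, hab2⟩ := List.length_eq_two.mp hlen
  rw [hab2] at hcx hcy hmem ⊢
  refine List.isChain_pair.mpr ?_
  rintro rfl
  rcases hmem a (by simp) with rfl | rfl <;> simp_all [List.count_cons, hxy.symm]

theorem stmt8 [Fintype V] [DecidableEq V] (G : SimpleGraph V) (w : List V)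
    (hrep : Represents G w)
    (hmin : ∀ w' : List V, Represents G w' → w.length ≤ w'.length) :
    (Finset.univ.filter fun v : V => w.count v = 1).card ≤ G.cliqueNum := by
  have hclique : G.IsClique ((Finset.univ.filter fun v : V => w.count v = 1) : Finset V) := by
    intro x hx y hy hxy
    simp only [Finset.coe_filter, Set.mem_setOf_eq] at hx hy
    exact (hrep.2 x y hxy).mpr (once_alternates x y w hxy hx.2 hy.2)
  exact IsClique.card_le_cliqueNum (tc := hclique)
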